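/- Let s, t and k be positive integers with t ≥ s and k ≥ 2. If s ≥ 3k − 1, then the k-coalition number of the complete bipartite graph K_{s,t} satisfies C_k(K_{s,t}) = s + t − 4k + 4. -/

import Mathlib

open SimpleGraph

/-- A set `S` is a `k`-dominating set of `G` if every vertex outside `S`
has at least `k` neighbors in `S`. -/
def KDominatingSet {V : Type*} (G : SimpleGraph V) (k : ℕ) (S : Set V) : Prop :=
  ∀ v ∉ S, k ≤ (S ∩ G.neighborSet v).ncard

/-- Two disjoint sets `A` and `B` form a `k`-coalition in `G` if neither is a
`k`-dominating set of `G` but their union is. -/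
def KCoalition {V : Type*} (G : SimpleGraph V) (k : ℕ) (A B : Set V) : Prop :=
  Disjoint A B ∧ ¬ KDominatingSet G k A ∧ ¬ KDominatingSet G k B ∧
    KDominatingSet G k (A ∪ B)

/-- A `k`-coalition partition of `G` is a partition of the vertex set in which every
part is either a `k`-dominating set of cardinality `k` or forms a `k`-coalition with
another part. -/
def KCoalitionPartition {V : Type*} (G : SimpleGraph V) (k : ℕ) (P : Finset (Set V)) : Prop :=
  (∀ A ∈ P, A.Nonempty) ∧
  (P : Set (Set V)).PairwiseDisjoint id ∧
  (⋃ A ∈ P, A) = (Set.univ : Set V) ∧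
  ∀ A ∈ P, (KDominatingSet G k A ∧ A.ncard = k) ∨
    ∃ B ∈ P, B ≠ A ∧ KCoalition G k A B

/-- The `k`-coalition number of `G`: the maximum cardinality of a
`k`-coalition partition of `G`. -/
noncomputable def kCoalitionNumber {V : Type*} (G : SimpleGraph V) (k : ℕ) : ℕ :=
  sSup {n | ∃ P : Finset (Set V), KCoalitionPartition G k P ∧ P.card = n}




section Basics
variable {s t : ℕ}

local notation "VV" => (Fin s ⊕ Fin t)
local notation "GG" => completeBipartiteGraph (Fin s) (Fin t)

def Lset (s t : ℕ) : Set (Fin s ⊕ Fin t) := Set.range Sum.inl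
def Rset (s t : ℕ) : Set (Fin s ⊕ Fin t) := Set.range Sum.inr

lemma ncard_Lset : (Lset s t).ncard = s := by
  rw [Lset, ← Nat.card_coe_set_eq, Nat.card_range_of_injective Sum.inl_injective]
  simp

lemma ncard_Rset : (Rset s t).ncard = t := by
  rw [Rset, ← Nat.card_coe_set_eq, Nat.card_range_of_injective Sum.inr_injective]
  simp

lemma nbhd_inl (a : Fin s) : (GG).neighborSet (Sum.inl a) = Rset s t := by
  ext w; cases w <;> simp [completeBipartiteGraph, Rset, neighborSet]

lemma nbhd_inr (b : Fin t) : (GG).neighborSet (Sum.inr b) = Lset s t := by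
  ext w; cases w <;> simp [completeBipartiteGraph, Lset, neighborSet]

lemma dom_iff {k : ℕ} {S : Set VV} :
    KDominatingSet GG k S ↔
      ((Lset s t ⊆ S ∨ k ≤ (S ∩ Rset s t).ncard) ∧
       (Rset s t ⊆ S ∨ k ≤ (S ∩ Lset s t).ncard)) := by
  constructor
  · intro h
    constructor
    · by_cases hl : Lset s t ⊆ S
      · exact Or.inl hl
      · right
        obtain ⟨v, hv, hvs⟩ := Set.not_subset.mp hl
        obtain ⟨a, rfl⟩ := hv
        have := h _ hvs
        rwa [nbhd_inl] at this
    · by_cases hr : Rset s t ⊆ S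
      · exact Or.inl hr
      · right
        obtain ⟨v, hv, hvs⟩ := Set.not_subset.mp hr
        obtain ⟨b, rfl⟩ := hv
        have := h _ hvs
        rwa [nbhd_inr] at this
  · rintro ⟨h1, h2⟩ v hv
    match v with
    | Sum.inl a =>
      rw [nbhd_inl]
      rcases h1 with h1 | h1
      · exact absurd (h1 ⟨a, rfl⟩) hv
      · exact h1
    | Sum.inr b =>
      rw [nbhd_inr]
      rcases h2 with h2 | h2
      · exact absurd (h2 ⟨b, rfl⟩) hv
      · exact h2

lemma ncard_split (S : Set VV) :
    S.ncard = (S ∩ Lset s t).ncard + (S ∩ Rset s t).ncard := by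
  rw [← Set.ncard_union_eq]
  · congr 1
    ext v
    cases v with
    | inl a => simp [Lset, Rset]
    | inr b => simp [Lset, Rset]
  · rw [Set.disjoint_left]
    rintro v ⟨-, a, rfl⟩ ⟨-, b, hb⟩
    exact absurd hb (by simp)



lemma ncard_inter_union {A B T : Set (Fin s ⊕ Fin t)} (h : Disjoint A B) :
    ((A ∪ B) ∩ T).ncard = (A ∩ T).ncard + (B ∩ T).ncard := by
  rw [Set.union_inter_distrib_right, Set.ncard_union_eq]
  exact h.mono Set.inter_subset_left Set.inter_subset_left

end Basics

lemma sum_inter_ncard {α : Type*} [Finite α] (P : Finset (Set α))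
    (hdisj : (P : Set (Set α)).PairwiseDisjoint id) (T : Set α) :
    ∑ A ∈ P, (A ∩ T).ncard = ((⋃ A ∈ P, A) ∩ T).ncard := by
  classical
  induction P using Finset.induction_on with
  | empty => simp
  | @insert B Q hB ih =>
    have hdQ : (Q : Set (Set α)).PairwiseDisjoint id := by
      apply hdisj.subset
      simp [Finset.coe_insert, Set.subset_insert]
    rw [Finset.sum_insert hB, ih hdQ, Finset.set_biUnion_insert, Set.union_inter_distrib_right,
      Set.ncard_union_eq]
    rw [Set.disjoint_left]
    rintro v ⟨hvB, hvT⟩ ⟨hvU, -⟩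
    obtain ⟨A, hA, hvA⟩ := Set.mem_iUnion₂.mp hvU
    have hBA : B ≠ A := fun h => hB (h ▸ hA)
    have := hdisj (by simp) (by simp [hA]) hBA
    exact (Set.disjoint_left.mp this) hvB hvA

lemma star_count {α : Type*} [DecidableEq α] (P : Finset α) (Z : α) (hZ : Z ∈ P)
    (f g : α → ℕ) (S T k : ℕ)
    (hfS : ∑ X ∈ P, f X = S) (hgT : ∑ X ∈ P, g X = T)
    (ha : f Z < k) (hb : g Z < T) (hkS : k ≤ S)
    (hn : ∀ X ∈ P.erase Z, k ≤ f X + f Z ∨ g X + g Z = T) :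
    P.card ≤ S - k + 3 := by
  classical
  set ER := (P.erase Z).filter (fun X => f X + f Z < k) with hERdef
  have hERmem : ∀ X ∈ ER, g X + g Z = T := by
    intro X hX
    have h1 := Finset.mem_filter.mp hX
    rcases hn X h1.1 with h | h
    · omega
    · exact h
  have hER1 : ER.card ≤ 1 := by
    rw [Finset.card_le_one]
    intro X hX Y hY
    by_contra hXY
    have hXe := (Finset.mem_filter.mp hX).1
    have hYe := (Finset.mem_filter.mp hY).1
    have hXP : X ∈ P := Finset.mem_of_mem_erase hXe
    have hYP : Y ∈ P := Finset.mem_of_mem_erase hYe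
    have hXZ : X ≠ Z := Finset.ne_of_mem_erase hXe
    have hYZ : Y ≠ Z := Finset.ne_of_mem_erase hYe
    have hsub : ({X, Y, Z} : Finset α) ⊆ P := by
      intro v hv
      simp only [Finset.mem_insert, Finset.mem_singleton] at hv
      rcases hv with rfl | rfl | rfl <;> assumption
    have h3 : ∑ v ∈ ({X, Y, Z} : Finset α), g v ≤ T := by
      rw [← hgT]; exact Finset.sum_le_sum_of_subset hsub
    rw [Finset.sum_insert (by simp [hXY, hXZ]), Finset.sum_insert (by simp [hYZ]),
      Finset.sum_singleton] at h3
    have e1 := hERmem X hX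
    have e2 := hERmem Y hY
    omega
  set Reg := (P.erase Z).filter (fun X => ¬ (f X + f Z < k)) with hRegdef
  have hsplit : ER.card + Reg.card = (P.erase Z).card :=
    Finset.card_filter_add_card_filter_not _
  have hRegf : ∀ X ∈ Reg, k - f Z ≤ f X := by
    intro X hX
    have := (Finset.mem_filter.mp hX).2
    omega
  have hsum2 : f Z + ∑ X ∈ P.erase Z, f X = S := by
    rw [Finset.add_sum_erase _ f hZ]; exact hfS
  have hsum3 : ∑ X ∈ Reg, f X ≤ ∑ X ∈ P.erase Z, f X :=
    Finset.sum_le_sum_of_subset (Finset.filter_subset _ _)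
  have hcard : Reg.card * (k - f Z) ≤ ∑ X ∈ Reg, f X := by
    simpa using Finset.card_nsmul_le_sum Reg f (k - f Z) hRegf
  have hq : Reg.card ≤ S - k + 1 := by
    have h1 : Reg.card * (k - f Z) ≤ (S - k + 1) * (k - f Z) := by
      have e1 : (S - k + 1) * (k - f Z) = (S - k) * (k - f Z) + (k - f Z) := Nat.succ_mul _ _
      have e2 : S - k ≤ (S - k) * (k - f Z) :=
        Nat.le_mul_of_pos_right _ (by omega)
      have e3 : Reg.card * (k - f Z) + f Z ≤ S := by
        have := le_trans hcard hsum3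
        omega
      omega
    exact Nat.le_of_mul_le_mul_right h1 (by omega)
  have hPe : (P.erase Z).card = P.card - 1 := Finset.card_erase_of_mem hZ
  have hPpos : 0 < P.card := Finset.card_pos.mpr ⟨Z, hZ⟩
  omega


lemma star_count2 {α : Type*} [DecidableEq α] (P : Finset α) (Z : α) (hZ : Z ∈ P)
    (f g : α → ℕ) (S T k : ℕ)
    (hfS : ∑ X ∈ P, f X = S) (hgT : ∑ X ∈ P, g X = T)
    (ha : f Z < k) (hb : g Z < k) (haS : f Z < S) (hbT : g Z < T)
    (hz1 : 1 ≤ f Z + g Z)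
    (hS : 3 * k ≤ S + 1) (hT : 3 * k ≤ T + 1) (hk : 2 ≤ k)
    (hn1 : ∀ X ∈ P.erase Z, k ≤ g X + g Z ∨ f X + f Z = S)
    (hn2 : ∀ X ∈ P.erase Z, k ≤ f X + f Z ∨ g X + g Z = T) :
    P.card + 4 * k ≤ S + T + 4 := by
  classical
  set a := f Z with hadef
  set b := g Z with hbdef
  set EL := (P.erase Z).filter (fun X => g X + b < k) with hELdef
  set ER := (P.erase Z).filter (fun X => f X + a < k) with hERdef
  have hELmem : ∀ X ∈ EL, f X + a = S := by
    intro X hX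
    have h1 := Finset.mem_filter.mp hX
    rcases hn1 X h1.1 with h | h
    · omega
    · exact h
  have hERmem : ∀ X ∈ ER, g X + b = T := by
    intro X hX
    have h1 := Finset.mem_filter.mp hX
    rcases hn2 X h1.1 with h | h
    · omega
    · exact h
  have card_le_one :
      ∀ (E : Finset α) (h : α → ℕ) (U : ℕ), E ⊆ P.erase Z → (∀ X ∈ E, h X + h Z = U) →
        (∑ X ∈ P, h X = U) → h Z < U → E.card ≤ 1 := by
    intro E h U hEsub hmem hsum hlt
    rw [Finset.card_le_one]
    intro X hX Y hY
    by_contra hXY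
    have hXe := hEsub hX
    have hYe := hEsub hY
    have hXZ : X ≠ Z := Finset.ne_of_mem_erase hXe
    have hYZ : Y ≠ Z := Finset.ne_of_mem_erase hYe
    have hsub : ({X, Y, Z} : Finset α) ⊆ P := by
      intro v hv
      simp only [Finset.mem_insert, Finset.mem_singleton] at hv
      rcases hv with rfl | rfl | rfl
      · exact Finset.mem_of_mem_erase hXe
      · exact Finset.mem_of_mem_erase hYe
      · exact hZ
    have h3 : ∑ v ∈ ({X, Y, Z} : Finset α), h v ≤ U := by
      rw [← hsum]; exact Finset.sum_le_sum_of_subset hsub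
    rw [Finset.sum_insert (by simp [hXY, hXZ]), Finset.sum_insert (by simp [hYZ]),
      Finset.sum_singleton] at h3
    have e1 := hmem X hX
    have e2 := hmem Y hY
    omega
  have hEL1 : EL.card ≤ 1 :=
    card_le_one EL f S (Finset.filter_subset _ _) hELmem hfS haS
  have hER1 : ER.card ≤ 1 :=
    card_le_one ER g T (Finset.filter_subset _ _) hERmem hgT hbT
  set E := (P.erase Z).filter (fun X => f X + a < k ∨ g X + b < k) with hEdef
  have hEsub : E ⊆ ER ∪ EL := by
    intro X hX
    have h1 := Finset.mem_filter.mp hX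
    rcases h1.2 with h | h
    · exact Finset.mem_union_left _ (Finset.mem_filter.mpr ⟨h1.1, h⟩)
    · exact Finset.mem_union_right _ (Finset.mem_filter.mpr ⟨h1.1, h⟩)
  have hE2 : E.card ≤ 2 := by
    calc E.card ≤ (ER ∪ EL).card := Finset.card_le_card hEsub
      _ ≤ ER.card + EL.card := Finset.card_union_le _ _
      _ ≤ 2 := by omega
  have hEbig : ∀ X ∈ E, 2 * k ≤ f X + g X := by
    intro X hX
    have h1 := Finset.mem_filter.mp hX
    rcases h1.2 with h | h
    · have := hERmem X (Finset.mem_filter.mpr ⟨h1.1, h⟩)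
      omega
    · have := hELmem X (Finset.mem_filter.mpr ⟨h1.1, h⟩)
      omega
  set Reg := (P.erase Z).filter (fun X => ¬ (f X + a < k ∨ g X + b < k)) with hRegdef
  have hsplit : E.card + Reg.card = (P.erase Z).card :=
    Finset.card_filter_add_card_filter_not _
  set z := a + b with hzdef
  set d := 2 * k - z with hddef
  have hd2 : 2 ≤ d := by omega
  have hdk : d ≤ 2 * k - 1 := by omega
  have hRegbig : ∀ X ∈ Reg, d ≤ f X + g X := by
    intro X hX
    have h1 := (Finset.mem_filter.mp hX).2
    push_neg at h1
    omega
  have hsumfg : ∑ X ∈ P, (f X + g X) = S + T := by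
    rw [Finset.sum_add_distrib, hfS, hgT]
  have hsum2 : z + ∑ X ∈ P.erase Z, (f X + g X) = S + T := by
    rw [Finset.add_sum_erase _ (fun X => f X + g X) hZ]; exact hsumfg
  have hER : Disjoint E Reg := by
    rw [Finset.disjoint_left]
    intro X hX hX'
    have h1 := (Finset.mem_filter.mp hX).2
    have h2 := (Finset.mem_filter.mp hX').2
    exact h2 h1
  have hunion : E ∪ Reg = P.erase Z := by
    apply Finset.Subset.antisymm
    · intro X hX
      rcases Finset.mem_union.mp hX with h | h
      · exact (Finset.mem_filter.mp h).1
      · exact (Finset.mem_filter.mp h).1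
    · intro X hX
      by_cases h : f X + a < k ∨ g X + b < k
      · exact Finset.mem_union_left _ (Finset.mem_filter.mpr ⟨hX, h⟩)
      · exact Finset.mem_union_right _ (Finset.mem_filter.mpr ⟨hX, h⟩)
  have hkey : z + 2 * k * E.card + d * Reg.card ≤ S + T := by
    have h1 : ∑ X ∈ P.erase Z, (f X + g X)
        = ∑ X ∈ E, (f X + g X) + ∑ X ∈ Reg, (f X + g X) := by
      rw [← Finset.sum_union hER, hunion]
    have h2 : E.card * (2 * k) ≤ ∑ X ∈ E, (f X + g X) := by
      simpa using Finset.card_nsmul_le_sum E (fun X => f X + g X) (2 * k) hEbig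
    have h3 : Reg.card * d ≤ ∑ X ∈ Reg, (f X + g X) := by
      simpa using Finset.card_nsmul_le_sum Reg (fun X => f X + g X) d hRegbig
    have h4 : E.card * (2 * k) = 2 * k * E.card := by ring
    have h5 : Reg.card * d = d * Reg.card := by ring
    omega
  -- integer arithmetic
  set m := P.card with hmdef
  set e := E.card with hedef
  set q := Reg.card with hqdef
  have hcards : e + q = m - 1 := by
    rw [hedef, hqdef, hsplit]; rw [Finset.card_erase_of_mem hZ]
  have hm1 : 1 ≤ m := Finset.card_pos.mpr ⟨Z, hZ⟩
  have hzd : (z : ℤ) = 2 * k - d := by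
    have : z ≤ 2 * k := by omega
    omega
  have hNk : (6 : ℤ) * k - 2 ≤ (S : ℤ) + T := by
    have : 6 * k ≤ S + T + 2 := by omega
    omega
  have hkeyZ : (z : ℤ) + 2 * k * e + d * q ≤ (S : ℤ) + T := by exact_mod_cast hkey
  have idty : (((S : ℤ) + T) - 4 * k + 3 - e) * d - (((S : ℤ) + T) - z - 2 * k * e)
      = (((S : ℤ) + T) - 6 * k + 2) * (d - 1) + 2 * k * (d - 2) + e * (2 * k - d) + 2 := by
    rw [hzd]; ring
  have hpos1 : (0 : ℤ) ≤ (((S : ℤ) + T) - 6 * k + 2) * (d - 1) := by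
    apply mul_nonneg
    · omega
    · have : (2 : ℤ) ≤ d := by exact_mod_cast hd2
      omega
  have hpos2 : (0 : ℤ) ≤ 2 * k * (d - 2) := by
    apply mul_nonneg
    · positivity
    · have : (2 : ℤ) ≤ d := by exact_mod_cast hd2
      omega
  have hpos3 : (0 : ℤ) ≤ (e : ℤ) * (2 * k - d) := by
    apply mul_nonneg
    · positivity
    · have : (d : ℤ) ≤ 2 * k - 1 := by
        have h1 : (d : ℤ) = ((d : ℕ) : ℤ) := rfl
        have : d + 1 ≤ 2 * k := by omega
        omega
      omega
  have hmul : (q : ℤ) * d ≤ (((S : ℤ) + T) - 4 * k + 3 - e) * d := by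
    linarith [idty, hpos1, hpos2, hpos3, hkeyZ]
  have hqle : (q : ℤ) ≤ ((S : ℤ) + T) - 4 * k + 3 - e := by
    have hd0 : (0 : ℤ) < d := by
      have : (2 : ℤ) ≤ d := by exact_mod_cast hd2
      omega
    exact le_of_mul_le_mul_right hmul hd0
  have final : (m : ℤ) + 4 * k ≤ (S : ℤ) + T + 4 := by
    have hm : (m : ℤ) = 1 + e + q := by
      have : e + q + 1 = m := by omega
      omega
    omega
  exact_mod_cast final

section Upper
variable {s t k : ℕ}
local notation "VV" => (Fin s ⊕ Fin t)
local notation "GG" => completeBipartiteGraph (Fin s) (Fin t)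

lemma dom_size (hk : 1 ≤ k) (hs : 3 * k ≤ s + 1) (ht : 3 * k ≤ t + 1)
    {S : Set VV} (hdom : KDominatingSet GG k S) : k + 1 ≤ S.ncard := by
  rw [dom_iff] at hdom
  obtain ⟨h1, h2⟩ := hdom
  have hsplit := ncard_split S
  rcases h1 with h1 | h1
  · have := Set.ncard_le_ncard h1 S.toFinite
    rw [ncard_Lset] at this
    have h2' : (S ∩ Lset s t).ncard ≤ S.ncard := Set.ncard_le_ncard Set.inter_subset_left S.toFinite
    omega
  · rcases h2 with h2 | h2
    · have := Set.ncard_le_ncard h2 S.toFinite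
      rw [ncard_Rset] at this
      omega
    · omega

lemma upper_bound (hk : 2 ≤ k) (hs : 3 * k ≤ s + 1) (ht : 3 * k ≤ t + 1)
    (P : Finset (Set VV)) (hP : KCoalitionPartition GG k P) :
    P.card + 4 * k ≤ s + t + 4 := by
  classical
  obtain ⟨hne, hdisj, hcover, hcoal⟩ := hP
  have hnodom : ∀ A ∈ P, ¬ KDominatingSet GG k A := by
    intro A hA hdom
    rcases hcoal A hA with ⟨-, hcard⟩ | ⟨B, hB, hBA, hc⟩
    · have := dom_size (by omega) hs ht hdom
      omega
    · exact hc.2.1 hdom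
  have hpartner : ∀ A ∈ P, ∃ B ∈ P, B ≠ A ∧ KDominatingSet GG k (A ∪ B) := by
    intro A hA
    rcases hcoal A hA with ⟨hdom, -⟩ | ⟨B, hB, hBA, hc⟩
    · exact absurd hdom (hnodom A hA)
    · exact ⟨B, hB, hBA, hc.2.2.2⟩
  have hdisj' : ∀ A ∈ P, ∀ B ∈ P, A ≠ B → Disjoint A B := by
    intro A hA B hB hAB
    exact hdisj (Finset.mem_coe.mpr hA) (Finset.mem_coe.mpr hB) hAB
  have hnum : ∀ A ∈ P, ∀ B ∈ P, A ≠ B → KDominatingSet GG k (A ∪ B) →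
      (k ≤ (A ∩ Rset s t).ncard + (B ∩ Rset s t).ncard ∨
        (A ∩ Lset s t).ncard + (B ∩ Lset s t).ncard = s) ∧
      (k ≤ (A ∩ Lset s t).ncard + (B ∩ Lset s t).ncard ∨
        (A ∩ Rset s t).ncard + (B ∩ Rset s t).ncard = t) := by
    intro A hA B hB hAB hdom
    rw [dom_iff] at hdom
    have hd := hdisj' A hA B hB hAB
    have hl : ((A ∪ B) ∩ Lset s t).ncard
        = (A ∩ Lset s t).ncard + (B ∩ Lset s t).ncard := ncard_inter_union hd
    have hr : ((A ∪ B) ∩ Rset s t).ncard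
        = (A ∩ Rset s t).ncard + (B ∩ Rset s t).ncard := ncard_inter_union hd
    constructor
    · rcases hdom.1 with h | h
      · right
        rw [← hl, Set.inter_eq_right.mpr h, ncard_Lset]
      · left; rwa [hr] at h
    · rcases hdom.2 with h | h
      · right
        rw [← hr, Set.inter_eq_right.mpr h, ncard_Rset]
      · left; rwa [hl] at h
  have hsL : ∑ A ∈ P, (A ∩ Lset s t).ncard = s := by
    rw [sum_inter_ncard P hdisj (Lset s t), hcover, Set.univ_inter, ncard_Lset]
  have hsR : ∑ A ∈ P, (A ∩ Rset s t).ncard = t := by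
    rw [sum_inter_ncard P hdisj (Rset s t), hcover, Set.univ_inter, ncard_Rset]
  have hsN : ∑ A ∈ P, A.ncard = s + t := by
    calc ∑ A ∈ P, A.ncard = ∑ A ∈ P, ((A ∩ Lset s t).ncard + (A ∩ Rset s t).ncard) :=
          Finset.sum_congr rfl (fun A _ => ncard_split A)
      _ = s + t := by rw [Finset.sum_add_distrib, hsL, hsR]
  have hone : ∀ A ∈ P, 1 ≤ A.ncard := by
    intro A hA
    exact (Set.ncard_pos A.toFinite).mpr (hne A hA)
  by_cases hm3 : P.card ≤ 3
  · omega
  push_neg at hm3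
  by_cases h2 : ∃ A ∈ P, ∃ B ∈ P, ∃ C ∈ P, ∃ D ∈ P, A ≠ B ∧ C ≠ D ∧ C ≠ A ∧ C ≠ B ∧
      D ≠ A ∧ D ≠ B ∧ KDominatingSet GG k (A ∪ B) ∧ KDominatingSet GG k (C ∪ D)
  · obtain ⟨A, hA, B, hB, C, hC, D, hD, hAB, hCD, hCA, hCB, hDA, hDB, hd1, hd2⟩ := h2
    have p1 : 2 * k ≤ A.ncard + B.ncard := by
      have h := hnum A hA B hB hAB hd1
      have eA := ncard_split A
      have eB := ncard_split B
      omega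
    have p2 : 2 * k ≤ C.ncard + D.ncard := by
      have h := hnum C hC D hD hCD hd2
      have eC := ncard_split C
      have eD := ncard_split D
      omega
    have hQsub : ({A, B, C, D} : Finset (Set VV)) ⊆ P := by
      intro v hv
      simp only [Finset.mem_insert, Finset.mem_singleton] at hv
      rcases hv with rfl | rfl | rfl | rfl <;> assumption
    have hAn : A ∉ ({B, C, D} : Finset (Set VV)) := by
      simp only [Finset.mem_insert, Finset.mem_singleton]
      push_neg
      exact ⟨hAB, Ne.symm hCA, Ne.symm hDA⟩
    have hBn : B ∉ ({C, D} : Finset (Set VV)) := by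
      simp only [Finset.mem_insert, Finset.mem_singleton]
      push_neg
      exact ⟨Ne.symm hCB, Ne.symm hDB⟩
    have hCn : C ∉ ({D} : Finset (Set VV)) := by
      simp only [Finset.mem_singleton]
      exact hCD
    have hQcard : ({A, B, C, D} : Finset (Set VV)).card = 4 := by
      rw [Finset.card_insert_of_notMem hAn, Finset.card_insert_of_notMem hBn,
        Finset.card_insert_of_notMem hCn, Finset.card_singleton]
    have hsumQ : ∑ X ∈ ({A, B, C, D} : Finset (Set VV)), X.ncard
        = A.ncard + B.ncard + C.ncard + D.ncard := by
      rw [Finset.sum_insert hAn, Finset.sum_insert hBn, Finset.sum_insert hCn,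
        Finset.sum_singleton]
      ring
    have hsdiff : ∑ X ∈ P \ {A, B, C, D}, X.ncard
        + ∑ X ∈ ({A, B, C, D} : Finset (Set VV)), X.ncard = s + t := by
      rw [Finset.sum_sdiff hQsub, hsN]
    have hrest : (P \ ({A, B, C, D} : Finset (Set VV))).card
        ≤ ∑ X ∈ P \ {A, B, C, D}, X.ncard := by
      have := Finset.card_nsmul_le_sum (P \ {A, B, C, D}) (fun X => X.ncard) 1
        (fun X hX => hone X (Finset.mem_sdiff.mp hX).1)
      simpa using this
    have hcsd : (P \ ({A, B, C, D} : Finset (Set VV))).card = P.card - 4 := by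
      rw [Finset.card_sdiff_of_subset hQsub, hQcard]
    omega
  · -- star case
    obtain ⟨A₁, hA₁⟩ := Finset.card_pos.mp (by omega : 0 < P.card)
    obtain ⟨B₁, hB₁, hB₁ne, hdom1⟩ := hpartner A₁ hA₁
    have hsub2 : ({A₁, B₁} : Finset (Set VV)) ⊆ P := by
      intro v hv
      simp only [Finset.mem_insert, Finset.mem_singleton] at hv
      rcases hv with rfl | rfl <;> assumption
    have hpos : 0 < (P \ ({A₁, B₁} : Finset (Set VV))).card := by
      rw [Finset.card_sdiff_of_subset hsub2]
      have : ({A₁, B₁} : Finset (Set VV)).card ≤ 2 := Finset.card_insert_le _ _ |>.trans (by simp)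
      omega
    obtain ⟨A₂, hA₂⟩ := Finset.card_pos.mp hpos
    rw [Finset.mem_sdiff] at hA₂
    obtain ⟨hA₂P, hA₂n⟩ := hA₂
    simp only [Finset.mem_insert, Finset.mem_singleton] at hA₂n
    push_neg at hA₂n
    obtain ⟨hA₂1, hA₂2⟩ := hA₂n
    obtain ⟨B₂, hB₂, hB₂ne, hdom2⟩ := hpartner A₂ hA₂P
    have hB₂mem : B₂ = A₁ ∨ B₂ = B₁ := by
      by_contra hcon
      push_neg at hcon
      exact h2 ⟨A₁, hA₁, B₁, hB₁, A₂, hA₂P, B₂, hB₂, Ne.symm hB₁ne, Ne.symm hB₂ne,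
        hA₂1, hA₂2, hcon.1, hcon.2, hdom1, hdom2⟩
    set Z := B₂ with hZdef
    have hZP : Z ∈ P := hB₂
    have hstar : ∀ X ∈ P, X ≠ Z → KDominatingSet GG k (X ∪ Z) := by
      intro X hX hXZ
      by_cases hX2 : X = A₂
      · subst hX2; exact hdom2
      · by_cases hXA₁ : X = A₁
        · rcases hB₂mem with h | h
          · exact absurd (hXA₁.trans h.symm) hXZ
          · have he : X ∪ Z = A₁ ∪ B₁ := by rw [hXA₁, h]
            rw [he]; exact hdom1
        · by_cases hXB₁ : X = B₁
          · rcases hB₂mem with h | h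
            · have he : X ∪ Z = B₁ ∪ A₁ := by rw [hXB₁, h]
              rw [he, Set.union_comm]; exact hdom1
            · exact absurd (hXB₁.trans h.symm) hXZ
          · obtain ⟨Y, hY, hYne, hdY⟩ := hpartner X hX
            have hY1 : Y = A₁ ∨ Y = B₁ := by
              by_contra hcon
              push_neg at hcon
              exact h2 ⟨A₁, hA₁, B₁, hB₁, X, hX, Y, hY, Ne.symm hB₁ne, Ne.symm hYne,
                hXA₁, hXB₁, hcon.1, hcon.2, hdom1, hdY⟩
            have hY2 : Y = A₂ ∨ Y = B₂ := by
              by_contra hcon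
              push_neg at hcon
              exact h2 ⟨A₂, hA₂P, B₂, hB₂, X, hX, Y, hY, Ne.symm hB₂ne, Ne.symm hYne,
                hX2, hXZ, hcon.1, hcon.2, hdom2, hdY⟩
            have hYZ : Y = Z := by
              rcases hY2 with h | h
              · rcases hY1 with h' | h'
                · exact absurd (h.symm.trans h') hA₂1
                · exact absurd (h.symm.trans h') hA₂2
              · exact h
            subst hYZ
            exact hdY
    have hnX : ∀ X ∈ P.erase Z,
        (k ≤ (X ∩ Rset s t).ncard + (Z ∩ Rset s t).ncard ∨
          (X ∩ Lset s t).ncard + (Z ∩ Lset s t).ncard = s) ∧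
        (k ≤ (X ∩ Lset s t).ncard + (Z ∩ Lset s t).ncard ∨
          (X ∩ Rset s t).ncard + (Z ∩ Rset s t).ncard = t) := by
      intro X hX
      have hXP := Finset.mem_of_mem_erase hX
      have hXZ := Finset.ne_of_mem_erase hX
      exact hnum X hXP Z hZP hXZ (hstar X hXP hXZ)
    have hnotboth : ¬(k ≤ (Z ∩ Lset s t).ncard ∧ k ≤ (Z ∩ Rset s t).ncard) := by
      rintro ⟨h1, h2'⟩
      exact hnodom Z hZP (dom_iff.mpr ⟨Or.inr h2', Or.inr h1⟩)
    have hnsubL : ¬ (Lset s t ⊆ Z) := by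
      intro h
      apply hnodom Z hZP
      rw [dom_iff]
      refine ⟨Or.inl h, Or.inr ?_⟩
      rw [Set.inter_eq_right.mpr h, ncard_Lset]
      omega
    have hnsubR : ¬ (Rset s t ⊆ Z) := by
      intro h
      apply hnodom Z hZP
      rw [dom_iff]
      refine ⟨Or.inr ?_, Or.inl h⟩
      rw [Set.inter_eq_right.mpr h, ncard_Rset]
      omega
    have haS : (Z ∩ Lset s t).ncard < s := by
      have hss : Z ∩ Lset s t ⊂ Lset s t := by
        refine ⟨Set.inter_subset_right, fun h => hnsubL ?_⟩
        intro v hv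
        exact ((Set.subset_def.mp h) v hv).1
      have := Set.ncard_lt_ncard hss (Set.toFinite _)
      rwa [ncard_Lset] at this
    have hbT : (Z ∩ Rset s t).ncard < t := by
      have hss : Z ∩ Rset s t ⊂ Rset s t := by
        refine ⟨Set.inter_subset_right, fun h => hnsubR ?_⟩
        intro v hv
        exact ((Set.subset_def.mp h) v hv).1
      have := Set.ncard_lt_ncard hss (Set.toFinite _)
      rwa [ncard_Rset] at this
    by_cases hbk : k ≤ (Z ∩ Rset s t).ncard
    · have halk : (Z ∩ Lset s t).ncard < k := by
        by_contra h
        exact hnotboth ⟨by omega, hbk⟩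
      have := star_count P Z hZP (fun A => (A ∩ Lset s t).ncard)
        (fun A => (A ∩ Rset s t).ncard) s t k hsL hsR halk hbT (by omega)
        (fun X hX => (hnX X hX).2)
      omega
    · by_cases hak : k ≤ (Z ∩ Lset s t).ncard
      · have := star_count P Z hZP (fun A => (A ∩ Rset s t).ncard)
          (fun A => (A ∩ Lset s t).ncard) t s k hsR hsL
          (show (Z ∩ Rset s t).ncard < k by omega) haS (by omega)
          (fun X hX => (hnX X hX).1)
        omega
      · have hz1 : 1 ≤ (Z ∩ Lset s t).ncard + (Z ∩ Rset s t).ncard := by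
          have := hone Z hZP
          have := ncard_split Z
          omega
        exact star_count2 P Z hZP (fun A => (A ∩ Lset s t).ncard)
          (fun A => (A ∩ Rset s t).ncard) s t k hsL hsR
          (show (Z ∩ Lset s t).ncard < k by omega)
          (show (Z ∩ Rset s t).ncard < k by omega) haS hbT hz1
          hs ht hk (fun X hX => (hnX X hX).1) (fun X hX => (hnX X hX).2)

end Upper

lemma ncard_val_interval {n m₁ m₂ : ℕ} (h : m₂ ≤ n) (S : Set (Fin n))
    (hS : ∀ a : Fin n, a ∈ S ↔ (m₁ ≤ a.val ∧ a.val < m₂)) : S.ncard = m₂ - m₁ := by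
  have hrange : S = Set.range (fun i : Fin (m₂ - m₁) => (⟨m₁ + i.val, by omega⟩ : Fin n)) := by
    ext x
    rw [hS]
    constructor
    · rintro ⟨h1, h2⟩
      exact ⟨⟨x.val - m₁, by omega⟩, by ext; simp; omega⟩
    · rintro ⟨i, rfl⟩
      simp
      omega
  rw [hrange, ← Nat.card_coe_set_eq, Nat.card_range_of_injective]
  · simp
  · intro i j hij
    simp only [Fin.mk.injEq] at hij
    ext
    omega

lemma card_filter_ge (n m : ℕ) (h : m ≤ n) :
    (Finset.univ.filter (fun a : Fin n => m ≤ a.val)).card = n - m := by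
  have himg : Finset.univ.filter (fun a : Fin n => m ≤ a.val)
      = Finset.univ.image (fun i : Fin (n - m) => (⟨m + i.val, by omega⟩ : Fin n)) := by
    ext x
    simp only [Finset.mem_filter, Finset.mem_univ, true_and, Finset.mem_image]
    constructor
    · intro hx
      exact ⟨⟨x.val - m, by omega⟩, by ext; simp; omega⟩
    · rintro ⟨i, -, rfl⟩
      simp
  rw [himg, Finset.card_image_of_injective _ (fun i j hij => by
    simp only [Fin.mk.injEq] at hij; ext; omega)]
  simp
section Lower
variable {s t k : ℕ}
local notation "VV" => (Fin s ⊕ Fin t)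
local notation "GG" => completeBipartiteGraph (Fin s) (Fin t)

lemma interL (X : Set (Fin s)) (Y : Set (Fin t)) :
    (Sum.inl '' X ∪ Sum.inr '' Y) ∩ Lset s t = Sum.inl '' X := by
  ext v
  cases v with
  | inl a => simp [Lset]
  | inr b => simp [Lset]

lemma interR (X : Set (Fin s)) (Y : Set (Fin t)) :
    (Sum.inl '' X ∪ Sum.inr '' Y) ∩ Rset s t = Sum.inr '' Y := by
  ext v
  cases v with
  | inl a => simp [Rset]
  | inr b => simp [Rset]

lemma singlL (a : Fin s) : ({Sum.inl a} : Set VV) ∩ Lset s t = {Sum.inl a} := by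
  ext v
  simp only [Set.mem_inter_iff, Set.mem_singleton_iff]
  constructor
  · tauto
  · rintro rfl
    exact ⟨rfl, ⟨a, rfl⟩⟩

lemma singlR (a : Fin s) : ({Sum.inl a} : Set VV) ∩ Rset s t = ∅ := by
  ext v
  simp only [Set.mem_inter_iff, Set.mem_singleton_iff, Set.mem_empty_iff_false, iff_false]
  rintro ⟨rfl, b, hb⟩
  exact absurd hb (by simp)

lemma singrR (b : Fin t) : ({Sum.inr b} : Set VV) ∩ Rset s t = {Sum.inr b} := by
  ext v
  simp only [Set.mem_inter_iff, Set.mem_singleton_iff]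
  constructor
  · tauto
  · rintro rfl
    exact ⟨rfl, ⟨b, rfl⟩⟩

lemma singrL (b : Fin t) : ({Sum.inr b} : Set VV) ∩ Lset s t = ∅ := by
  ext v
  simp only [Set.mem_inter_iff, Set.mem_singleton_iff, Set.mem_empty_iff_false, iff_false]
  rintro ⟨rfl, a, ha⟩
  exact absurd ha (by simp)

lemma lower_bound (hk : 2 ≤ k) (hs : 3 * k ≤ s + 1) (ht : 3 * k ≤ t + 1) :
    ∃ P : Finset (Set VV), KCoalitionPartition GG k P ∧ P.card = s + t - 4 * k + 4 := by
  classical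
  set X1 : Set (Fin s) := {a : Fin s | 0 ≤ a.val ∧ a.val < k - 1} with hX1
  set Y1 : Set (Fin t) := {b : Fin t | 0 ≤ b.val ∧ b.val < k} with hY1
  set X2 : Set (Fin s) := {a : Fin s | k - 1 ≤ a.val ∧ a.val < 2 * k - 1} with hX2
  set Y2 : Set (Fin t) := {b : Fin t | k ≤ b.val ∧ b.val < 2 * k - 1} with hY2
  set S1 : Set VV := Sum.inl '' X1 ∪ Sum.inr '' Y1 with hS1
  set S2 : Set VV := Sum.inl '' X2 ∪ Sum.inr '' Y2 with hS2
  set PS : Finset (Set VV) := (Finset.univ.filter (fun a : Fin s => 2 * k - 1 ≤ a.val)).image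
    (fun a => ({Sum.inl a} : Set VV)) with hPS
  set PT : Finset (Set VV) := (Finset.univ.filter (fun b : Fin t => 2 * k - 1 ≤ b.val)).image
    (fun b => ({Sum.inr b} : Set VV)) with hPT
  set P : Finset (Set VV) := insert S1 (insert S2 (PS ∪ PT)) with hP
  -- membership characterizations
  have S1l : ∀ a : Fin s, Sum.inl a ∈ S1 ↔ a.val < k - 1 := by
    intro a; simp [hS1, hX1, hY1]
  have S1r : ∀ b : Fin t, Sum.inr b ∈ S1 ↔ b.val < k := by
    intro b; simp [hS1, hX1, hY1]
  have S2l : ∀ a : Fin s, Sum.inl a ∈ S2 ↔ (k - 1 ≤ a.val ∧ a.val < 2 * k - 1) := by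
    intro a; simp [hS2, hX2, hY2]
  have S2r : ∀ b : Fin t, Sum.inr b ∈ S2 ↔ (k ≤ b.val ∧ b.val < 2 * k - 1) := by
    intro b; simp [hS2, hX2, hY2]
  have memPS : ∀ A : Set VV, A ∈ PS ↔ ∃ a : Fin s, 2 * k - 1 ≤ a.val ∧ A = {Sum.inl a} := by
    intro A
    simp only [hPS, Finset.mem_image, Finset.mem_filter, Finset.mem_univ, true_and]
    constructor
    · rintro ⟨a, ha, rfl⟩; exact ⟨a, ha, rfl⟩
    · rintro ⟨a, ha, rfl⟩; exact ⟨a, ha, rfl⟩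
  have memPT : ∀ A : Set VV, A ∈ PT ↔ ∃ b : Fin t, 2 * k - 1 ≤ b.val ∧ A = {Sum.inr b} := by
    intro A
    simp only [hPT, Finset.mem_image, Finset.mem_filter, Finset.mem_univ, true_and]
    constructor
    · rintro ⟨b, hb, rfl⟩; exact ⟨b, hb, rfl⟩
    · rintro ⟨b, hb, rfl⟩; exact ⟨b, hb, rfl⟩
  have memP : ∀ A : Set VV, A ∈ P ↔ A = S1 ∨ A = S2 ∨
      (∃ a : Fin s, 2 * k - 1 ≤ a.val ∧ A = {Sum.inl a}) ∨
      (∃ b : Fin t, 2 * k - 1 ≤ b.val ∧ A = {Sum.inr b}) := by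
    intro A
    simp only [hP, Finset.mem_insert, Finset.mem_union]
    rw [memPS, memPT]
  -- cardinalities of intersections
  have lcS1 : (S1 ∩ Lset s t).ncard = k - 1 := by
    rw [hS1, interL, Set.ncard_image_of_injective _ Sum.inl_injective]
    have := ncard_val_interval (n := s) (m₁ := 0) (m₂ := k - 1) (by omega) X1
      (fun a => Iff.rfl)
    omega
  have rcS1 : (S1 ∩ Rset s t).ncard = k := by
    rw [hS1, interR, Set.ncard_image_of_injective _ Sum.inr_injective]
    have := ncard_val_interval (n := t) (m₁ := 0) (m₂ := k) (by omega) Y1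
      (fun b => Iff.rfl)
    omega
  have lcS2 : (S2 ∩ Lset s t).ncard = k := by
    rw [hS2, interL, Set.ncard_image_of_injective _ Sum.inl_injective]
    have := ncard_val_interval (n := s) (m₁ := k - 1) (m₂ := 2 * k - 1) (by omega) X2
      (fun a => Iff.rfl)
    omega
  have rcS2 : (S2 ∩ Rset s t).ncard = k - 1 := by
    rw [hS2, interR, Set.ncard_image_of_injective _ Sum.inr_injective]
    have := ncard_val_interval (n := t) (m₁ := k) (m₂ := 2 * k - 1) (by omega) Y2
      (fun b => Iff.rfl)
    omega
  -- non-domination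
  have ndS1 : ¬ KDominatingSet GG k S1 := by
    rw [dom_iff]
    rintro ⟨-, h2⟩
    rcases h2 with h2 | h2
    · have h3 : 2 * k - 1 < k := by
        have := h2 ⟨(⟨2 * k - 1, by omega⟩ : Fin t), rfl⟩
        rwa [S1r] at this
      omega
    · rw [lcS1] at h2
      omega
  have ndS2 : ¬ KDominatingSet GG k S2 := by
    rw [dom_iff]
    rintro ⟨h1, -⟩
    rcases h1 with h1 | h1
    · have h3 : k - 1 ≤ 2 * k - 1 ∧ 2 * k - 1 < 2 * k - 1 := by
        have := h1 ⟨(⟨2 * k - 1, by omega⟩ : Fin s), rfl⟩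
        rwa [S2l] at this
      omega
    · rw [rcS2] at h1
      omega
  have ndSingL : ∀ a : Fin s, ¬ KDominatingSet GG k ({Sum.inl a} : Set VV) := by
    intro a
    rw [dom_iff]
    rintro ⟨h1, -⟩
    rcases h1 with h1 | h1
    · by_cases h0 : a.val = 0
      · have h4 : Sum.inl (⟨1, by omega⟩ : Fin s) ∈ ({Sum.inl a} : Set VV) := h1 ⟨_, rfl⟩
        rw [Set.mem_singleton_iff] at h4
        have h5 : a.val = 1 := by rw [← Sum.inl_injective h4]
        omega
      · have h4 : Sum.inl (⟨0, by omega⟩ : Fin s) ∈ ({Sum.inl a} : Set VV) := h1 ⟨_, rfl⟩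
        rw [Set.mem_singleton_iff] at h4
        have h5 : a.val = 0 := by rw [← Sum.inl_injective h4]
        omega
    · rw [singlR] at h1
      simp at h1
      omega
  have ndSingR : ∀ b : Fin t, ¬ KDominatingSet GG k ({Sum.inr b} : Set VV) := by
    intro b
    rw [dom_iff]
    rintro ⟨-, h2⟩
    rcases h2 with h2 | h2
    · by_cases h0 : b.val = 0
      · have h4 : Sum.inr (⟨1, by omega⟩ : Fin t) ∈ ({Sum.inr b} : Set VV) := h2 ⟨_, rfl⟩
        rw [Set.mem_singleton_iff] at h4
        have h5 : b.val = 1 := by rw [← Sum.inr_injective h4]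
        omega
      · have h4 : Sum.inr (⟨0, by omega⟩ : Fin t) ∈ ({Sum.inr b} : Set VV) := h2 ⟨_, rfl⟩
        rw [Set.mem_singleton_iff] at h4
        have h5 : b.val = 0 := by rw [← Sum.inr_injective h4]
        omega
    · rw [singrL] at h2
      simp at h2
      omega
  -- disjointness helpers
  have dS1singL : ∀ a : Fin s, 2 * k - 1 ≤ a.val → Disjoint S1 ({Sum.inl a} : Set VV) := by
    intro a ha
    rw [Set.disjoint_singleton_right, S1l]
    omega
  have dS2singR : ∀ b : Fin t, 2 * k - 1 ≤ b.val → Disjoint S2 ({Sum.inr b} : Set VV) := by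
    intro b hb
    rw [Set.disjoint_singleton_right, S2r]
    omega
  -- dominating unions
  have domU1 : ∀ a : Fin s, 2 * k - 1 ≤ a.val → KDominatingSet GG k (S1 ∪ {Sum.inl a}) := by
    intro a ha
    have hd := dS1singL a ha
    rw [dom_iff]
    constructor
    · right
      rw [ncard_inter_union hd, rcS1, singlR]
      simp
    · right
      rw [ncard_inter_union hd, lcS1, singlL, Set.ncard_singleton]
      omega
  have domU2 : ∀ b : Fin t, 2 * k - 1 ≤ b.val → KDominatingSet GG k (S2 ∪ {Sum.inr b}) := by
    intro b hb
    have hd := dS2singR b hb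
    rw [dom_iff]
    constructor
    · right
      rw [ncard_inter_union hd, rcS2, singrR, Set.ncard_singleton]
      omega
    · right
      rw [ncard_inter_union hd, lcS2, singrL]
      simp
  -- the four partition properties
  refine ⟨P, ⟨?_, ?_, ?_, ?_⟩, ?_⟩
  · -- nonempty
    intro A hA
    rcases (memP A).mp hA with rfl | rfl | ⟨a, ha, rfl⟩ | ⟨b, hb, rfl⟩
    · exact ⟨Sum.inr ⟨0, by omega⟩, (S1r _).mpr (by simp; omega)⟩
    · exact ⟨Sum.inl ⟨k - 1, by omega⟩, (S2l _).mpr (by simp; omega)⟩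
    · exact ⟨Sum.inl a, rfl⟩
    · exact ⟨Sum.inr b, rfl⟩
  · -- pairwise disjoint
    intro A hA B hB hAB
    rw [Finset.mem_coe] at hA hB
    have hgoal : Disjoint A B → Disjoint (id A) (id B) := fun h => h
    apply hgoal
    rcases (memP A).mp hA with rfl | rfl | ⟨a, ha, rfl⟩ | ⟨b, hb, rfl⟩ <;>
      rcases (memP B).mp hB with rfl | rfl | ⟨a', ha', rfl⟩ | ⟨b', hb', rfl⟩
    · exact absurd rfl hAB
    · -- S1 vs S2
      rw [Set.disjoint_left]
      intro v hv1 hv2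
      cases v with
      | inl x => rw [S1l] at hv1; rw [S2l] at hv2; omega
      | inr y => rw [S1r] at hv1; rw [S2r] at hv2; omega
    · exact dS1singL a' ha'
    · rw [Set.disjoint_singleton_right, S1r]; omega
    · -- S2 vs S1
      rw [Set.disjoint_left]
      intro v hv1 hv2
      cases v with
      | inl x => rw [S2l] at hv1; rw [S1l] at hv2; omega
      | inr y => rw [S2r] at hv1; rw [S1r] at hv2; omega
    · exact absurd rfl hAB
    · rw [Set.disjoint_singleton_right, S2l]; omega
    · exact dS2singR b' hb'
    · exact (dS1singL a ha).symm
    · exact Disjoint.symm (by rw [Set.disjoint_singleton_right, S2l]; omega)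
    · rw [Set.disjoint_singleton_left, Set.mem_singleton_iff]
      intro h
      exact hAB (by rw [Sum.inl_injective h])
    · rw [Set.disjoint_singleton_left, Set.mem_singleton_iff]
      intro h
      exact absurd h (by simp)
    · exact Disjoint.symm (by rw [Set.disjoint_singleton_right, S1r]; omega)
    · exact (dS2singR b hb).symm
    · rw [Set.disjoint_singleton_left, Set.mem_singleton_iff]
      intro h
      exact absurd h (by simp)
    · rw [Set.disjoint_singleton_left, Set.mem_singleton_iff]
      intro h
      exact hAB (by rw [Sum.inr_injective h])
  · -- cover
    ext v
    simp only [Set.mem_iUnion, exists_prop, Set.mem_univ, iff_true]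
    cases v with
    | inl a =>
      by_cases h1 : a.val < k - 1
      · exact ⟨S1, (memP S1).mpr (Or.inl rfl), (S1l a).mpr h1⟩
      · by_cases h2 : a.val < 2 * k - 1
        · exact ⟨S2, (memP S2).mpr (Or.inr (Or.inl rfl)), (S2l a).mpr ⟨by omega, h2⟩⟩
        · exact ⟨{Sum.inl a}, (memP _).mpr (Or.inr (Or.inr (Or.inl ⟨a, by omega, rfl⟩))), rfl⟩
    | inr b =>
      by_cases h1 : b.val < k
      · exact ⟨S1, (memP S1).mpr (Or.inl rfl), (S1r b).mpr h1⟩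
      · by_cases h2 : b.val < 2 * k - 1
        · exact ⟨S2, (memP S2).mpr (Or.inr (Or.inl rfl)), (S2r b).mpr ⟨by omega, h2⟩⟩
        · exact ⟨{Sum.inr b}, (memP _).mpr (Or.inr (Or.inr (Or.inr ⟨b, by omega, rfl⟩))), rfl⟩
  · -- coalition condition
    intro A hA
    right
    have hxs : 2 * k - 1 < s := by omega
    have hxt : 2 * k - 1 < t := by omega
    have hS1nsing : ∀ a : Fin s, S1 ≠ ({Sum.inl a} : Set VV) := by
      intro a h
      have : Sum.inr (⟨0, by omega⟩ : Fin t) ∈ S1 := (S1r _).mpr (by simp; omega)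
      have h7 := (Set.ext_iff.mp h _).mp this
      exact absurd h7 (by simp)
    have hS2nsing : ∀ b : Fin t, S2 ≠ ({Sum.inr b} : Set VV) := by
      intro b h
      have : Sum.inl (⟨k - 1, by omega⟩ : Fin s) ∈ S2 := (S2l _).mpr (by simp; omega)
      have h7 := (Set.ext_iff.mp h _).mp this
      exact absurd h7 (by simp)
    rcases (memP A).mp hA with rfl | rfl | ⟨a, ha, rfl⟩ | ⟨b, hb, rfl⟩
    · refine ⟨{Sum.inl ⟨2 * k - 1, hxs⟩}, (memP _).mpr (Or.inr (Or.inr (Or.inl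
        ⟨_, by simp, rfl⟩))), fun h => hS1nsing _ h.symm, ?_⟩
      exact ⟨dS1singL _ (by simp), ndS1, ndSingL _, domU1 _ (by simp)⟩
    · refine ⟨{Sum.inr ⟨2 * k - 1, hxt⟩}, (memP _).mpr (Or.inr (Or.inr (Or.inr
        ⟨_, by simp, rfl⟩))), fun h => hS2nsing _ h.symm, ?_⟩
      exact ⟨dS2singR _ (by simp), ndS2, ndSingR _, domU2 _ (by simp)⟩
    · refine ⟨S1, (memP _).mpr (Or.inl rfl), hS1nsing a, ?_⟩
      refine ⟨(dS1singL a ha).symm, ndSingL _, ndS1, ?_⟩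
      rw [Set.union_comm]
      exact domU1 a ha
    · refine ⟨S2, (memP _).mpr (Or.inr (Or.inl rfl)), hS2nsing b, ?_⟩
      refine ⟨(dS2singR b hb).symm, ndSingR _, ndS2, ?_⟩
      rw [Set.union_comm]
      exact domU2 b hb
  · -- cardinality
    have hS1nsingl : ∀ a : Fin s, S1 ≠ ({Sum.inl a} : Set VV) := by
      intro a h
      have : Sum.inr (⟨0, by omega⟩ : Fin t) ∈ S1 := (S1r _).mpr (by simp; omega)
      have h7 := (Set.ext_iff.mp h _).mp this
      exact absurd h7 (by simp)
    have hS1nsingr : ∀ b : Fin t, S1 ≠ ({Sum.inr b} : Set VV) := by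
      intro b h
      have : Sum.inl (⟨0, by omega⟩ : Fin s) ∈ S1 := (S1l _).mpr (by simp; omega)
      have h7 := (Set.ext_iff.mp h _).mp this
      exact absurd h7 (by simp)
    have hS2nsingl : ∀ a : Fin s, S2 ≠ ({Sum.inl a} : Set VV) := by
      intro a h
      have : Sum.inr (⟨k, by omega⟩ : Fin t) ∈ S2 := (S2r _).mpr (by simp; omega)
      have h7 := (Set.ext_iff.mp h _).mp this
      exact absurd h7 (by simp)
    have hS2nsingr : ∀ b : Fin t, S2 ≠ ({Sum.inr b} : Set VV) := by
      intro b h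
      have : Sum.inl (⟨k - 1, by omega⟩ : Fin s) ∈ S2 := (S2l _).mpr (by simp; omega)
      have h7 := (Set.ext_iff.mp h _).mp this
      exact absurd h7 (by simp)
    have hS12 : S1 ≠ S2 := by
      intro h
      have : Sum.inr (⟨0, by omega⟩ : Fin t) ∈ S1 := (S1r _).mpr (by simp; omega)
      have h7 := (Set.ext_iff.mp h _).mp this
      rw [S2r] at h7
      have h8 : k ≤ 0 := h7.1
      omega
    have hS1n : S1 ∉ insert S2 (PS ∪ PT) := by
      simp only [Finset.mem_insert, Finset.mem_union]
      push_neg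
      refine ⟨hS12, ?_, ?_⟩
      · intro h
        obtain ⟨a, -, h⟩ := (memPS S1).mp h
        exact hS1nsingl a h
      · intro h
        obtain ⟨b, -, h⟩ := (memPT S1).mp h
        exact hS1nsingr b h
    have hS2n : S2 ∉ PS ∪ PT := by
      simp only [Finset.mem_union]
      push_neg
      constructor
      · intro h
        obtain ⟨a, -, h⟩ := (memPS S2).mp h
        exact hS2nsingl a h
      · intro h
        obtain ⟨b, -, h⟩ := (memPT S2).mp h
        exact hS2nsingr b h
    have hPSPT : Disjoint PS PT := by
      rw [Finset.disjoint_left]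
      intro A hA hA'
      obtain ⟨a, -, rfl⟩ := (memPS A).mp hA
      obtain ⟨b, -, h⟩ := (memPT _).mp hA'
      have : Sum.inl a ∈ ({Sum.inr b} : Set VV) := h ▸ rfl
      exact absurd this (by simp)
    have hcPS : PS.card = s - (2 * k - 1) := by
      rw [hPS, Finset.card_image_of_injective _ (fun a a' h => by
        have : Sum.inl a ∈ ({Sum.inl a'} : Set VV) := h ▸ rfl
        exact Sum.inl_injective this), card_filter_ge _ _ (by omega)]
    have hcPT : PT.card = t - (2 * k - 1) := by
      rw [hPT, Finset.card_image_of_injective _ (fun b b' h => by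
        have : Sum.inr b ∈ ({Sum.inr b'} : Set VV) := h ▸ rfl
        exact Sum.inr_injective this), card_filter_ge _ _ (by omega)]
    rw [hP, Finset.card_insert_of_notMem hS1n, Finset.card_insert_of_notMem hS2n,
      Finset.card_union_of_disjoint hPSPT, hcPS, hcPT]
    omega

end Lower

theorem ck_completeBipartite_large (s t k : ℕ) (hs : 0 < s) (hst : s ≤ t) (hk : 2 ≤ k)
    (hks : 3 * k - 1 ≤ s) :
    kCoalitionNumber (completeBipartiteGraph (Fin s) (Fin t)) k = s + t - 4 * k + 4 := by
  have hs' : 3 * k ≤ s + 1 := by omega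
  have ht' : 3 * k ≤ t + 1 := by omega
  obtain ⟨P0, hP0, hcard0⟩ := lower_bound hk hs' ht'
  unfold kCoalitionNumber
  apply le_antisymm
  · apply csSup_le
    · exact ⟨s + t - 4 * k + 4, P0, hP0, hcard0⟩
    · rintro n ⟨P, hP, rfl⟩
      have := upper_bound hk hs' ht' P hP
      omega
  · apply le_csSup
    · refine ⟨s + t - 4 * k + 4, ?_⟩
      rintro n ⟨P, hP, rfl⟩
      have := upper_bound hk hs' ht' P hP
      omega
    · exact ⟨P0, hP0, hcard0⟩
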